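/- For every f ∈ Ω^0(T,D;L) with ∇_t f = 0 one has f = 0; that is, the kernel of ∇_t : Ω^0(T,D;L) → Ω^1(T,D;L) (the zeroth relative algebraic twisted de Rham cohomology group H^0_alg(T,D;L)) vanishes, for all values of the parameters α_0, …, α_{m+2}. -/

import Mathlib

open Polynomial

noncomputable section

/-- Formal derivative of a rational function over `ℂ`. -/
def ratDeriv (f : RatFunc ℂ) : RatFunc ℂ :=
  (algebraMap (Polynomial ℂ) (RatFunc ℂ) (derivative f.num) *
      algebraMap (Polynomial ℂ) (RatFunc ℂ) f.denom -
    algebraMap (Polynomial ℂ) (RatFunc ℂ) f.num *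
      algebraMap (Polynomial ℂ) (RatFunc ℂ) (derivative f.denom)) /
    algebraMap (Polynomial ℂ) (RatFunc ℂ) f.denom ^ 2

/-- Order of vanishing of a rational function at a point `p ∈ ℂ`. -/
def ordAt (f : RatFunc ℂ) (p : ℂ) : ℤ :=
  (f.num.rootMultiplicity p : ℤ) - (f.denom.rootMultiplicity p : ℤ)

/-- `f` vanishes to order at least `k` at `p` (the zero function counts). -/
def ordGE (f : RatFunc ℂ) (p : ℂ) (k : ℤ) : Prop :=
  f = 0 ∨ k ≤ ordAt f p

/-- `f` vanishes to order at least `k` at `∞`. -/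
def ordInfGE (f : RatFunc ℂ) (k : ℤ) : Prop :=
  f = 0 ∨ k ≤ (f.denom.natDegree : ℤ) - (f.num.natDegree : ℤ)

/-- `f` has no poles in `ℂ` outside the points `x 0, …, x (m+1)`. -/
def NoPolesOutside (m : ℕ) (x : ℕ → ℂ) (f : RatFunc ℂ) : Prop :=
  ∀ p : ℂ, (∀ i ≤ m + 1, p ≠ x i) → ordGE f p 0

/-- The logarithmic derivative `ω = Σ_{i=0}^{m+1} α_i/(t - x_i)` of `u`. -/
def omegaFD (m : ℕ) (x α : ℕ → ℂ) : RatFunc ℂ :=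
  ∑ i ∈ Finset.range (m + 2), RatFunc.C (α i) / (RatFunc.X - RatFunc.C (x i))

/-- The twisted differential `∇_t f = f' + ω f`. -/
def nablaFD (m : ℕ) (x α : ℕ → ℂ) (f : RatFunc ℂ) : RatFunc ℂ :=
  ratDeriv f + omegaFD m x α * f

/-- The space `Ω^0(T,D;L)`: rational functions with poles only at the `x_i`,
with `ord_{x_i} f ≥ 1 - α_i` for each `i ∈ I_D` (for `i ≤ m` this means
`α_i ∈ {0,1,2,…}`; for `i = m+1, m+2` it means `α_i ∈ {1,2,3,…}`). -/
def OmegaRel0 (m : ℕ) (x α : ℕ → ℂ) : Set (RatFunc ℂ) :=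
  {f | NoPolesOutside m x f ∧
    (∀ i ≤ m, ∀ n : ℕ, α i = (n : ℂ) → ordGE f (x i) (1 - (n : ℤ))) ∧
    (∀ n : ℕ, α (m + 1) = (n : ℂ) + 1 → ordGE f (x (m + 1)) (1 - ((n : ℤ) + 1))) ∧
    (∀ n : ℕ, α (m + 2) = (n : ℂ) + 1 → ordInfGE f (1 - ((n : ℤ) + 1)))}

namespace H0Aux

abbrev aM : Polynomial ℂ →+* RatFunc ℂ := algebraMap (Polynomial ℂ) (RatFunc ℂ)

lemma aM_ne {P : Polynomial ℂ} (h : P ≠ 0) : aM P ≠ 0 :=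
  RatFunc.algebraMap_ne_zero h

lemma cross {f : RatFunc ℂ} {A B : Polynomial ℂ} (hB : B ≠ 0)
    (h : f = aM A / aM B) : f.num * B = A * f.denom :=
  (RatFunc.num_mul_eq_mul_denom_iff hB).mpr h

lemma ratDeriv_eq (A : Polynomial ℂ) {B : Polynomial ℂ} (hB : B ≠ 0) :
    ratDeriv (aM A / aM B) =
      aM (derivative A * B - A * derivative B) / aM (B ^ 2) := by
  set f := aM A / aM B with hf
  have hc : f.num * B = A * f.denom := cross hB hf
  have hc' : derivative f.num * B + f.num * derivative B
      = derivative A * f.denom + A * derivative f.denom := by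
    have := congrArg derivative hc
    simpa [derivative_mul] using this
  have key : (derivative f.num * f.denom - f.num * derivative f.denom) * B ^ 2
      = (derivative A * B - A * derivative B) * f.denom ^ 2 := by
    linear_combination (f.denom * B) * hc' - (derivative B * f.denom + derivative f.denom * B) * hc
  rw [ratDeriv, div_eq_div_iff (pow_ne_zero 2 (aM_ne (RatFunc.denom_ne_zero f)))
    (aM_ne (pow_ne_zero 2 hB))]
  simp only [← map_pow, ← map_mul, ← map_sub]
  exact congrArg aM key


def LD (f : RatFunc ℂ) : RatFunc ℂ := ratDeriv f / f

lemma ratDeriv_aM (P : Polynomial ℂ) : ratDeriv (aM P) = aM (derivative P) := by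
  have := ratDeriv_eq (B := 1) P one_ne_zero
  simpa using this

lemma LD_eq {A B : Polynomial ℂ} (hA : A ≠ 0) (hB : B ≠ 0) :
    LD (aM A / aM B) = aM (derivative A * B - A * derivative B) / aM (A * B) := by
  rw [LD, ratDeriv_eq A hB]
  rw [div_div_div_comm, map_pow, sq, mul_div_assoc, div_self (aM_ne hB), mul_one, div_div,
    ← map_mul]

lemma LD_mul {f g : RatFunc ℂ} (hf : f ≠ 0) (hg : g ≠ 0) :
    LD (f * g) = LD f + LD g := by
  have h1 : f = aM f.num / aM f.denom := (RatFunc.num_div_denom f).symm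
  have h2 : g = aM g.num / aM g.denom := (RatFunc.num_div_denom g).symm
  have h3 : f * g = aM (f.num * g.num) / aM (f.denom * g.denom) := by
    rw [map_mul, map_mul, ← div_mul_div_comm, ← h1, ← h2]
  have hfn := RatFunc.num_ne_zero hf
  have hgn := RatFunc.num_ne_zero hg
  have hfd := RatFunc.denom_ne_zero f
  have hgd := RatFunc.denom_ne_zero g
  rw [h3, LD_eq (mul_ne_zero hfn hgn) (mul_ne_zero hfd hgd)]
  conv_rhs => rw [h1, h2, LD_eq hfn hfd, LD_eq hgn hgd]
  rw [div_add_div _ _ (aM_ne (mul_ne_zero hfn hfd)) (aM_ne (mul_ne_zero hgn hgd)),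
    ← map_mul, ← map_mul, ← map_mul, ← map_add]
  rw [div_eq_div_iff (aM_ne (by exact mul_ne_zero (mul_ne_zero hfn hgn) (mul_ne_zero hfd hgd)))
    (aM_ne (mul_ne_zero (mul_ne_zero hfn hfd) (mul_ne_zero hgn hgd)))]
  rw [← map_mul, ← map_mul]
  apply congrArg aM
  simp only [derivative_mul]
  ring

lemma LD_one : LD 1 = 0 := by
  have : (1 : RatFunc ℂ) = aM 1 := by simp
  rw [LD, this, ratDeriv_aM]
  simp

lemma LD_inv {f : RatFunc ℂ} (hf : f ≠ 0) : LD f⁻¹ = -LD f := by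
  have h := LD_mul hf (inv_ne_zero hf)
  rw [mul_inv_cancel₀ hf, LD_one] at h
  linear_combination -h

lemma LD_pow (n : ℕ) {f : RatFunc ℂ} (hf : f ≠ 0) : LD (f ^ n) = (n : RatFunc ℂ) * LD f := by
  induction n with
  | zero => simp [LD_one]
  | succ k ih =>
    rw [pow_succ, LD_mul (pow_ne_zero k hf) hf, ih]
    push_cast
    ring

lemma LD_zpow (d : ℤ) {f : RatFunc ℂ} (hf : f ≠ 0) :
    LD (f ^ d) = (d : RatFunc ℂ) * LD f := by
  cases d with
  | ofNat n => rw [Int.ofNat_eq_coe, zpow_natCast, LD_pow n hf]; push_cast; ring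
  | negSucc n =>
    rw [zpow_negSucc, LD_inv (pow_ne_zero _ hf), LD_pow _ hf]
    push_cast
    ring


lemma ordAt_eq {A B : Polynomial ℂ} (p : ℂ) (hA : A ≠ 0) (hB : B ≠ 0) :
    ordAt (aM A / aM B) p = (A.rootMultiplicity p : ℤ) - (B.rootMultiplicity p : ℤ) := by
  set f := aM A / aM B with hfd
  have hf : f ≠ 0 := div_ne_zero (aM_ne hA) (aM_ne hB)
  have hc : f.num * B = A * f.denom := cross hB hfd
  have h1 : f.num.rootMultiplicity p + B.rootMultiplicity p
      = A.rootMultiplicity p + f.denom.rootMultiplicity p := by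
    have l := congrArg (Polynomial.rootMultiplicity p) hc
    rwa [Polynomial.rootMultiplicity_mul (mul_ne_zero (RatFunc.num_ne_zero hf) hB),
      Polynomial.rootMultiplicity_mul (mul_ne_zero hA (RatFunc.denom_ne_zero f))] at l
  rw [ordAt]
  omega

lemma ordAt_mul {f g : RatFunc ℂ} (p : ℂ) (hf : f ≠ 0) (hg : g ≠ 0) :
    ordAt (f * g) p = ordAt f p + ordAt g p := by
  have h3 : f * g = aM (f.num * g.num) / aM (f.denom * g.denom) := by
    conv_lhs => rw [← RatFunc.num_div_denom f, ← RatFunc.num_div_denom g]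
    rw [map_mul, map_mul, ← div_mul_div_comm]
  have e1 : f = aM f.num / aM f.denom := (RatFunc.num_div_denom f).symm
  have e2 : g = aM g.num / aM g.denom := (RatFunc.num_div_denom g).symm
  rw [h3, ordAt_eq p (mul_ne_zero (RatFunc.num_ne_zero hf) (RatFunc.num_ne_zero hg))
    (mul_ne_zero (RatFunc.denom_ne_zero f) (RatFunc.denom_ne_zero g)),
    Polynomial.rootMultiplicity_mul (mul_ne_zero (RatFunc.num_ne_zero hf) (RatFunc.num_ne_zero hg)),
    Polynomial.rootMultiplicity_mul (mul_ne_zero (RatFunc.denom_ne_zero f) (RatFunc.denom_ne_zero g)),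
    ordAt, ordAt]
  push_cast
  ring

lemma ordAt_one (p : ℂ) : ordAt (1 : RatFunc ℂ) p = 0 := by
  have : (1 : RatFunc ℂ) = aM 1 / aM 1 := by simp
  rw [this, ordAt_eq p one_ne_zero one_ne_zero]
  ring

lemma ordAt_inv {f : RatFunc ℂ} (p : ℂ) (hf : f ≠ 0) : ordAt f⁻¹ p = -ordAt f p := by
  have h := ordAt_mul p hf (inv_ne_zero hf)
  rw [mul_inv_cancel₀ hf, ordAt_one] at h
  omega

lemma ordAt_pow {f : RatFunc ℂ} (p : ℂ) (hf : f ≠ 0) (n : ℕ) :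
    ordAt (f ^ n) p = n * ordAt f p := by
  induction n with
  | zero => simpa using ordAt_one p
  | succ k ih => rw [pow_succ, ordAt_mul p (pow_ne_zero k hf) hf, ih]; push_cast; ring

lemma ordAt_zpow {f : RatFunc ℂ} (p : ℂ) (hf : f ≠ 0) (d : ℤ) :
    ordAt (f ^ d) p = d * ordAt f p := by
  cases d with
  | ofNat n => rw [Int.ofNat_eq_coe, zpow_natCast, ordAt_pow p hf n]
  | negSucc n =>
    rw [zpow_negSucc, ordAt_inv p (pow_ne_zero _ hf), ordAt_pow p hf, Int.negSucc_eq]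
    push_cast
    ring

lemma ordAt_X_sub_C (p : ℂ) : ordAt (aM (X - C p)) p = 1 := by
  have h : aM (X - C p) = aM (X - C p) / aM 1 := by simp
  rw [h, ordAt_eq p (X_sub_C_ne_zero p) one_ne_zero]
  simp [Polynomial.rootMultiplicity_X_sub_C_self,
    Polynomial.rootMultiplicity_eq_zero (by simp [Polynomial.IsRoot] : ¬(1 : Polynomial ℂ).IsRoot p)]

/-- both num and denom do not vanish at a point where `ordAt f p = 0`. -/
lemma eval_ne_of_ordAt_zero {f : RatFunc ℂ} {p : ℂ} (hf : f ≠ 0) (h0 : ordAt f p = 0) :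
    f.num.eval p ≠ 0 ∧ f.denom.eval p ≠ 0 := by
  have hcop := RatFunc.isCoprime_num_denom f
  obtain ⟨u, v, huv⟩ := hcop
  have hboth : ¬(f.num.eval p = 0 ∧ f.denom.eval p = 0) := by
    rintro ⟨h1, h2⟩
    have := congrArg (Polynomial.eval p) huv
    simp [h1, h2] at this
  have hrm : f.num.rootMultiplicity p = f.denom.rootMultiplicity p := by
    rw [ordAt] at h0; omega
  constructor
  · intro h1
    have hn : 0 < f.num.rootMultiplicity p :=
      (Polynomial.rootMultiplicity_pos (RatFunc.num_ne_zero hf)).mpr h1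
    have hd : 0 < f.denom.rootMultiplicity p := hrm ▸ hn
    have : f.denom.IsRoot p := by
      by_contra hc
      rw [Polynomial.rootMultiplicity_eq_zero hc] at hd; omega
    exact hboth ⟨h1, this⟩
  · intro h2
    have hd : 0 < f.denom.rootMultiplicity p :=
      (Polynomial.rootMultiplicity_pos (RatFunc.denom_ne_zero f)).mpr h2
    have hn : 0 < f.num.rootMultiplicity p := hrm ▸ hd
    have : f.num.IsRoot p := by
      by_contra hc
      rw [Polynomial.rootMultiplicity_eq_zero hc] at hn; omega
    exact hboth ⟨this, h2⟩

/-- regular at `p` : the reduced denominator does not vanish. -/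
def Reg (p : ℂ) (f : RatFunc ℂ) : Prop := f.denom.eval p ≠ 0

lemma Reg.ordAt_nonneg {p : ℂ} {f : RatFunc ℂ} (hr : Reg p f) (hf : f ≠ 0) :
    0 ≤ ordAt f p := by
  have : f.denom.rootMultiplicity p = 0 :=
    Polynomial.rootMultiplicity_eq_zero hr
  rw [ordAt, this]
  omega

lemma reg_of_dvd {p : ℂ} {f : RatFunc ℂ} {B : Polynomial ℂ} (hd : f.denom ∣ B)
    (hB : B.eval p ≠ 0) : Reg p f := by
  obtain ⟨k, rfl⟩ := hd
  intro h
  apply hB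
  rw [Polynomial.eval_mul, h, zero_mul]

lemma reg_div {p : ℂ} (A : Polynomial ℂ) {B : Polynomial ℂ} (hB : B ≠ 0)
    (hBp : B.eval p ≠ 0) : Reg p (aM A / aM B) :=
  reg_of_dvd ((RatFunc.denom_dvd hB).mpr ⟨A, rfl⟩) hBp

lemma reg_zero (p : ℂ) : Reg p 0 := by
  have : (0 : RatFunc ℂ) = aM 0 / aM 1 := by simp
  rw [this]; exact reg_div 0 one_ne_zero (by simp)

lemma reg_add {p : ℂ} {f g : RatFunc ℂ} (hf : Reg p f) (hg : Reg p g) : Reg p (f + g) :=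
  reg_of_dvd (RatFunc.denom_add_dvd f g) (by
    rw [Polynomial.eval_mul]; exact mul_ne_zero hf hg)

lemma reg_mul {p : ℂ} {f g : RatFunc ℂ} (hf : Reg p f) (hg : Reg p g) : Reg p (f * g) :=
  reg_of_dvd (RatFunc.denom_mul_dvd f g) (by
    rw [Polynomial.eval_mul]; exact mul_ne_zero hf hg)

lemma reg_neg {p : ℂ} {f : RatFunc ℂ} (hf : Reg p f) : Reg p (-f) := by
  have h1 : Reg p (aM (C (-1)) / aM 1) := reg_div _ one_ne_zero (by simp)
  have : (-f) = (aM (C (-1)) / aM 1) * f := by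
    simp [map_neg]
  rw [this]
  exact reg_mul h1 hf

lemma reg_sum {p : ℂ} {ι : Type*} (s : Finset ι) (F : ι → RatFunc ℂ)
    (h : ∀ i ∈ s, Reg p (F i)) : Reg p (∑ i ∈ s, F i) := by
  classical
  induction s using Finset.induction with
  | empty => simpa using reg_zero p
  | insert a s' hx ih =>
    rw [Finset.sum_insert hx]
    exact reg_add (h a (Finset.mem_insert_self a s'))
      (ih fun i hi => h i (Finset.mem_insert_of_mem hi))


lemma reg_LD_of_ordAt_zero {g : RatFunc ℂ} {p : ℂ} (hg : g ≠ 0) (h0 : ordAt g p = 0) :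
    Reg p (LD g) := by
  obtain ⟨hN, hD⟩ := eval_ne_of_ordAt_zero hg h0
  have hLD : LD g = aM (derivative g.num * g.denom - g.num * derivative g.denom)
      / aM (g.num * g.denom) := by
    conv_lhs => rw [← RatFunc.num_div_denom g]
    exact LD_eq (RatFunc.num_ne_zero hg) (RatFunc.denom_ne_zero g)
  rw [hLD]
  exact reg_div _ (mul_ne_zero (RatFunc.num_ne_zero hg) (RatFunc.denom_ne_zero g))
    (by rw [Polynomial.eval_mul]; exact mul_ne_zero hN hD)

lemma LD_X_sub_C (p : ℂ) : LD (aM (X - C p)) = (aM (X - C p))⁻¹ := by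
  conv_lhs => rw [show (aM (X - C p) : RatFunc ℂ) = aM (X - C p) / aM 1 by simp]
  rw [LD_eq (X_sub_C_ne_zero p) one_ne_zero]
  simp [one_div]

/-- residue decomposition of the logarithmic derivative at a point. -/
lemma residue_decomp (f : RatFunc ℂ) (hf : f ≠ 0) (p : ℂ) :
    ∃ h : RatFunc ℂ, Reg p h ∧
      LD f = RatFunc.C ((ordAt f p : ℤ) : ℂ) * (aM (X - C p))⁻¹ + h := by
  set d : ℤ := ordAt f p with hd
  set ξ : RatFunc ℂ := aM (X - C p) with hxi
  have hξ : ξ ≠ 0 := aM_ne (X_sub_C_ne_zero p)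
  set g : RatFunc ℂ := f * ξ ^ (-d) with hg
  have hg0 : g ≠ 0 := mul_ne_zero hf (zpow_ne_zero _ hξ)
  have hfg : f = g * ξ ^ d := by
    rw [hg, mul_assoc, ← zpow_add₀ hξ, neg_add_cancel, zpow_zero, mul_one]
  have hordg : ordAt g p = 0 := by
    rw [hg, ordAt_mul p hf (zpow_ne_zero _ hξ), ordAt_zpow p hξ, hxi, ordAt_X_sub_C p,
      mul_one, ← hd]
    ring
  refine ⟨LD g, reg_LD_of_ordAt_zero hg0 hordg, ?_⟩
  rw [hfg, LD_mul hg0 (zpow_ne_zero _ hξ), LD_zpow d hξ, LD_X_sub_C p]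
  have : ((d : RatFunc ℂ)) = RatFunc.C ((d : ℤ) : ℂ) := by
    rw [map_intCast]
  rw [this]
  ring

/-- a rational function `C c / (X - p)` regular at `p` must vanish. -/
lemma resid_zero {c : ℂ} {p : ℂ} {h : RatFunc ℂ} (hh : Reg p h)
    (heq : RatFunc.C c * (aM (X - C p))⁻¹ + h = 0) : c = 0 := by
  by_contra hc
  have hCc : (RatFunc.C c : RatFunc ℂ) ≠ 0 := by
    rw [← RatFunc.algebraMap_C]
    exact aM_ne (by simpa using hc)
  have hξ : (aM (X - C p) : RatFunc ℂ) ≠ 0 := aM_ne (X_sub_C_ne_zero p)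
  have hL : RatFunc.C c * (aM (X - C p))⁻¹ ≠ 0 :=
    mul_ne_zero hCc (inv_ne_zero hξ)
  have hhne : h ≠ 0 := by
    intro h0
    rw [h0, add_zero] at heq
    exact hL heq
  have hordL : ordAt (RatFunc.C c * (aM (X - C p))⁻¹) p = -1 := by
    rw [ordAt_mul p hCc (inv_ne_zero hξ), ordAt_inv p hξ, ordAt_X_sub_C]
    have : (RatFunc.C c : RatFunc ℂ) = aM (C c) / aM 1 := by
      rw [RatFunc.algebraMap_C]; simp
    rw [this, ordAt_eq p (by simpa using hc) one_ne_zero]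
    have h1 : (Polynomial.C c).rootMultiplicity p = 0 :=
      Polynomial.rootMultiplicity_eq_zero (by simp [Polynomial.IsRoot, hc])
    have h2 : (1 : Polynomial ℂ).rootMultiplicity p = 0 :=
      Polynomial.rootMultiplicity_eq_zero (by simp [Polynomial.IsRoot])
    rw [h1, h2]
    ring
  have hLh : RatFunc.C c * (aM (X - C p))⁻¹ = -h := by linear_combination heq
  have : (0 : ℤ) ≤ -1 := by
    rw [← hordL, hLh]
    exact Reg.ordAt_nonneg (reg_neg hh) (by simpa using hhne)
  omega


lemma natDegree_eq_sum_rm {P : Polynomial ℂ} (hP : P ≠ 0) (F : Finset ℂ)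
    (hroots : ∀ p : ℂ, P.IsRoot p → p ∈ F) :
    (P.natDegree : ℤ) = ∑ p ∈ F, (P.rootMultiplicity p : ℤ) := by
  classical
  have hsplit : P.natDegree = Multiset.card P.roots := by
    exact IsAlgClosed.card_roots_eq_natDegree.symm
  have hsub : P.roots.toFinset ⊆ F := by
    intro p hp
    exact hroots p (Polynomial.isRoot_of_mem_roots (Multiset.mem_toFinset.mp hp))
  have hsum : ∑ p ∈ F, P.roots.count p = Multiset.card P.roots := by
    rw [← Multiset.toFinset_sum_count_eq P.roots]
    exact (Finset.sum_subset hsub (fun p _ hnp =>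
      Multiset.count_eq_zero.mpr (fun hmem => hnp (Multiset.mem_toFinset.mpr hmem)))).symm
  have : ∑ p ∈ F, P.rootMultiplicity p = Multiset.card P.roots := by
    rw [← hsum]
    exact Finset.sum_congr rfl fun p _ => (Polynomial.count_roots P).symm
  rw [hsplit, ← this]
  push_cast
  ring

end H0Aux

open H0Aux

/-- the kernel of `∇_t : Ω^0(T,D;L) → Ω^1(T,D;L)` vanishes,
i.e. `H^0_alg(T,D;L) = 0`, for all parameters `α`. -/
theorem H0_alg_relative_vanishes
    (m : ℕ) (hm : 1 ≤ m) (x α : ℕ → ℂ)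
    (hx0 : x 0 = 0) (hx1 : x (m + 1) = 1)
    (hxdist : ∀ i ≤ m + 1, ∀ j ≤ m + 1, i ≠ j → x i ≠ x j)
    (hsum : ∑ i ∈ Finset.range (m + 3), α i = 0)
    (f : RatFunc ℂ) (hf : f ∈ OmegaRel0 m x α)
    (hker : nablaFD m x α f = 0) :
    f = 0 := by
  classical
  by_contra hf0
  obtain ⟨hnp, hcond1, hcond2, hcond3⟩ := hf
  -- rewrite ω
  have hω : omegaFD m x α = ∑ i ∈ Finset.range (m + 2),
      RatFunc.C (α i) * (aM (X - C (x i)))⁻¹ := by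
    rw [omegaFD]
    refine Finset.sum_congr rfl fun i _ => ?_
    rw [div_eq_mul_inv, map_sub, RatFunc.algebraMap_C, RatFunc.algebraMap_X]
  -- LD f = -ω
  have hLD : LD f = -omegaFD m x α := by
    have h1 : ratDeriv f = -(omegaFD m x α * f) := by
      have h := hker; rw [nablaFD] at h; linear_combination h
    rw [LD, h1]
    field_simp
  -- residues at the marked points
  have claim1 : ∀ i ∈ Finset.range (m + 2), ((ordAt f (x i) : ℤ) : ℂ) + α i = 0 := by
    intro i hi
    obtain ⟨h, hreg, hdecomp⟩ := residue_decomp f hf0 (x i)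
    have him : i ≤ m + 1 := by
      have := Finset.mem_range.mp hi; omega
    have hsplit : omegaFD m x α = RatFunc.C (α i) * (aM (X - C (x i)))⁻¹ +
        ∑ j ∈ (Finset.range (m + 2)).erase i,
          RatFunc.C (α j) * (aM (X - C (x j)))⁻¹ := by
      rw [hω, ← Finset.add_sum_erase _ _ hi]
    have hregrest : Reg (x i) (∑ j ∈ (Finset.range (m + 2)).erase i,
        RatFunc.C (α j) * (aM (X - C (x j)))⁻¹) := by
      refine reg_sum _ _ fun j hj => ?_
      have hji : j ≠ i := Finset.ne_of_mem_erase hj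
      have hjm : j ≤ m + 1 := by
        have := Finset.mem_range.mp (Finset.mem_of_mem_erase hj); omega
      have hxji : x j ≠ x i := hxdist j hjm i him hji
      have he : RatFunc.C (α j) * (aM (X - C (x j)))⁻¹
          = aM (C (α j)) / aM (X - C (x j)) := by
        rw [RatFunc.algebraMap_C, div_eq_mul_inv]
      rw [he]
      refine reg_div _ (X_sub_C_ne_zero _) ?_
      simp [sub_ne_zero.mpr (hxji.symm)]
    have hLD' : LD f = -(RatFunc.C (α i) * (aM (X - C (x i)))⁻¹ +
        ∑ j ∈ (Finset.range (m + 2)).erase i,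
          RatFunc.C (α j) * (aM (X - C (x j)))⁻¹) := by
      rw [hLD, hsplit]
    have hfinal : RatFunc.C (((ordAt f (x i) : ℤ) : ℂ) + α i) * (aM (X - C (x i)))⁻¹ +
        (h + ∑ j ∈ (Finset.range (m + 2)).erase i,
          RatFunc.C (α j) * (aM (X - C (x j)))⁻¹) = 0 := by
      rw [map_add]
      linear_combination hLD' - hdecomp
    exact resid_zero (reg_add hreg hregrest) hfinal
  -- no zeros or poles away from marked points
  have claim2 : ∀ p : ℂ, (∀ i ∈ Finset.range (m + 2), x i ≠ p) → ordAt f p = 0 := by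
    intro p hp
    obtain ⟨h, hreg, hdecomp⟩ := residue_decomp f hf0 p
    have hregrest : Reg p (∑ j ∈ Finset.range (m + 2),
        RatFunc.C (α j) * (aM (X - C (x j)))⁻¹) := by
      refine reg_sum _ _ fun j hj => ?_
      have he : RatFunc.C (α j) * (aM (X - C (x j)))⁻¹
          = aM (C (α j)) / aM (X - C (x j)) := by
        rw [RatFunc.algebraMap_C, div_eq_mul_inv]
      rw [he]
      refine reg_div _ (X_sub_C_ne_zero _) ?_
      simp [sub_ne_zero.mpr ((hp j hj).symm)]
    have hLD' : LD f = -(∑ j ∈ Finset.range (m + 2),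
        RatFunc.C (α j) * (aM (X - C (x j)))⁻¹) := by
      rw [hLD, hω]
    have hfinal : RatFunc.C ((ordAt f p : ℤ) : ℂ) * (aM (X - C p))⁻¹ +
        (h + ∑ j ∈ Finset.range (m + 2),
          RatFunc.C (α j) * (aM (X - C (x j)))⁻¹) = 0 := by
      linear_combination hLD' - hdecomp
    have := resid_zero (reg_add hreg hregrest) hfinal
    exact_mod_cast this
  -- all roots of num and denom are among the marked points
  set F : Finset ℂ := Finset.image x (Finset.range (m + 2)) with hF
  have hFroots : ∀ p : ℂ, (f.num.IsRoot p ∨ f.denom.IsRoot p) → p ∈ F := by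
    intro p hp
    by_contra hpF
    have hne : ∀ i ∈ Finset.range (m + 2), x i ≠ p := by
      intro i hi he
      exact hpF (hF ▸ Finset.mem_image.mpr ⟨i, hi, he⟩)
    obtain ⟨h1, h2⟩ := eval_ne_of_ordAt_zero hf0 (claim2 p hne)
    cases hp with
    | inl h => exact h1 h
    | inr h => exact h2 h
  -- total degree count
  have hinj : ∀ i ∈ Finset.range (m + 2), ∀ j ∈ Finset.range (m + 2),
      x i = x j → i = j := by
    intro i hi j hj he
    by_contra hij
    exact hxdist i (by have := Finset.mem_range.mp hi; omega)
      j (by have := Finset.mem_range.mp hj; omega) hij he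
  have hdegnum : (f.num.natDegree : ℤ) = ∑ p ∈ F, (f.num.rootMultiplicity p : ℤ) :=
    natDegree_eq_sum_rm (RatFunc.num_ne_zero hf0) F (fun p hp => hFroots p (Or.inl hp))
  have hdegden : (f.denom.natDegree : ℤ) = ∑ p ∈ F, (f.denom.rootMultiplicity p : ℤ) :=
    natDegree_eq_sum_rm (RatFunc.denom_ne_zero f) F (fun p hp => hFroots p (Or.inr hp))
  have hT : (f.num.natDegree : ℤ) - (f.denom.natDegree : ℤ)
      = ∑ i ∈ Finset.range (m + 2), ordAt f (x i) := by
    rw [hdegnum, hdegden, ← Finset.sum_sub_distrib, hF, Finset.sum_image hinj]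
    rfl
  set T : ℤ := (f.num.natDegree : ℤ) - (f.denom.natDegree : ℤ) with hTdef
  -- lower bounds at the marked points
  have hd1 : ∀ i ∈ Finset.range (m + 1), 1 ≤ ordAt f (x i) := by
    intro i hi
    by_contra hlt
    push_neg at hlt
    have him : i ≤ m := by have := Finset.mem_range.mp hi; omega
    have hd : ordAt f (x i) ≤ 0 := by omega
    have hαi : α i = (((-ordAt f (x i)).toNat : ℕ) : ℂ) := by
      have h1 := claim1 i (by rw [Finset.mem_range]; omega)
      have h2 : ((-ordAt f (x i)).toNat : ℤ) = -ordAt f (x i) := Int.toNat_of_nonneg (by omega)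
      have h3 : (((-ordAt f (x i)).toNat : ℕ) : ℂ) = ((-ordAt f (x i) : ℤ) : ℂ) := by
        exact_mod_cast congrArg (Int.cast : ℤ → ℂ) h2
      rw [h3]
      push_cast
      linear_combination h1
    have := (hcond1 i him _ hαi).resolve_left hf0
    have h2 : ((-ordAt f (x i)).toNat : ℤ) = -ordAt f (x i) := Int.toNat_of_nonneg (by omega)
    omega
  have hd2 : 0 ≤ ordAt f (x (m + 1)) := by
    by_contra hlt
    push_neg at hlt
    set d := ordAt f (x (m + 1)) with hddef
    have hαi : α (m + 1) = (((-d - 1).toNat : ℕ) : ℂ) + 1 := by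
      have h1 := claim1 (m + 1) (by rw [Finset.mem_range]; omega)
      have h2 : ((-d - 1).toNat : ℤ) = -d - 1 := Int.toNat_of_nonneg (by omega)
      have h3 : (((-d - 1).toNat : ℕ) : ℂ) = ((-d - 1 : ℤ) : ℂ) := by
        exact_mod_cast congrArg (Int.cast : ℤ → ℂ) h2
      rw [h3]
      push_cast
      rw [hddef]
      linear_combination h1
    have := (hcond2 _ hαi).resolve_left hf0
    have h2 : ((-d - 1).toNat : ℤ) = -d - 1 := Int.toNat_of_nonneg (by omega)
    omega
  -- T is positive
  have hTpos : 1 ≤ T := by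
    rw [hT, Finset.sum_range_succ]
    have : (m + 1 : ℤ) ≤ ∑ i ∈ Finset.range (m + 1), ordAt f (x i) := by
      calc (m + 1 : ℤ) = ∑ _i ∈ Finset.range (m + 1), (1 : ℤ) := by simp
        _ ≤ _ := Finset.sum_le_sum hd1
    omega
  -- the condition at infinity gives T ≤ 0
  have hαinf : α (m + 2) = ((T : ℤ) : ℂ) := by
    have hs : ∑ i ∈ Finset.range (m + 3), α i
        = (∑ i ∈ Finset.range (m + 2), α i) + α (m + 2) := Finset.sum_range_succ _ _
    have hsum2 : ∑ i ∈ Finset.range (m + 2), α i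
        = -((∑ i ∈ Finset.range (m + 2), ordAt f (x i) : ℤ) : ℂ) := by
      push_cast
      rw [← Finset.sum_neg_distrib]
      refine Finset.sum_congr rfl fun i hi => ?_
      have := claim1 i hi
      linear_combination this
    rw [hs, hsum2, ← hT] at hsum
    linear_combination hsum
  have hTle : T ≤ 0 := by
    by_contra hlt
    push_neg at hlt
    have hαi : α (m + 2) = (((T - 1).toNat : ℕ) : ℂ) + 1 := by
      have h2 : ((T - 1).toNat : ℤ) = T - 1 := Int.toNat_of_nonneg (by omega)
      have h3 : (((T - 1).toNat : ℕ) : ℂ) = ((T - 1 : ℤ) : ℂ) := by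
        exact_mod_cast congrArg (Int.cast : ℤ → ℂ) h2
      rw [hαinf, h3]
      push_cast
      ring
    have := (hcond3 _ hαi).resolve_left hf0
    have h2 : ((T - 1).toNat : ℤ) = T - 1 := Int.toNat_of_nonneg (by omega)
    omega
  omega


end
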